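/- Let K be a stationary kernel on ℝ², K(x,y) = K₀(x−y), with K(0,0) = K₀(0) > 0, and define the reduced Palm kernel at the origin by K_o^!(x,y) = (1/K(0,0))·(K(x,y)K(0,0) − K(x,0)K(0,y)). Let Φ̃ be a point process on ℝ² that satisfies the DPP Laplace identity with kernel K_o^! on compactly supported functions. Then the nearest neighbor function D(r) = P(Φ̃(B(0,r)) ≥ 1) satisfies, for all r ≥ 0, D(r) = Σ_{n=1}^∞ ((−1)^{n−1}/n!) ∫_{(B(0,r))^n} det(K_o^!(x_i,x_j))_{1≤i,j≤n} dx_1⋯dx_n, and this series moreover equals Σ_{n=1}^∞ ((−1)^{n−1}/n!) ∫_{(B(0,r))^n} (1/K(0,0)) det(K(x_i,x_j))_{0≤i,j≤n} dx_1⋯dx_n where the distinguished point in the (n+1)×(n+1) determinant is x₀ = 0. -/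

import Mathlib

open MeasureTheory Measure Metric Filter
open scoped ENNReal NNReal Real Topology BigOperators ComplexOrder

noncomputable section

abbrev E2 : Type := EuclideanSpace ℝ (Fin 2)

/-- `expNeg a = e^{-a}` for `a ∈ [0,∞]`, with `expNeg ∞ = 0`. -/
def expNeg (a : ℝ≥0∞) : ℝ := if a = ∞ then 0 else Real.exp (-a.toReal)

structure IsKernel (K : E2 → E2 → ℂ) : Prop where
  continuous : Continuous fun p : E2 × E2 => K p.1 p.2
  hermitian : ∀ x y : E2, K y x = starRingEnd ℂ (K x y)
  locSqInt : ∀ s : Set (E2 × E2), IsCompact s →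
    IntegrableOn (fun p : E2 × E2 => ‖K p.1 p.2‖ ^ 2) s
  posSemidef : ∀ (n : ℕ) (x : Fin n → E2),
    (Matrix.of fun i j : Fin n => K (x i) (x j)).PosSemidef

def dppTerm (K : E2 → E2 → ℂ) (g : E2 → ℝ) (n : ℕ) : ℂ :=
  ((-1 : ℂ) ^ n / n.factorial) *
    ∫ x : Fin n → E2,
      (Matrix.of fun i j : Fin n => K (x i) (x j)).det * ∏ i : Fin n, (g (x i) : ℂ)

def DPPLaplaceOnCompact {Ω : Type} [MeasurableSpace Ω] (μ : Measure Ω)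
    (Φ : Ω → Measure E2) (K : E2 → E2 → ℂ) : Prop :=
  ∀ f : E2 → ℝ≥0∞, Measurable f → (∃ s : Set E2, IsCompact s ∧ ∀ x ∉ s, f x = 0) →
    ((∫ ω, expNeg (∫⁻ x, f x ∂(Φ ω)) ∂μ : ℝ) : ℂ) =
      ∑' n : ℕ, dppTerm K (fun x => 1 - expNeg (f x)) n

/-- `∫_{(B(0,r))^n} det(K(x_i,x_j))_{1≤i,j≤n} dx_1⋯dx_n`. -/
def ballDetInt (K : E2 → E2 → ℂ) (r : ℝ) (n : ℕ) : ℂ :=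
  ∫ x in Set.univ.pi fun _ : Fin n => closedBall (0 : E2) r,
    (Matrix.of fun i j : Fin n => K (x i) (x j)).det

/-- `∫_{(B(0,r))^n} det(K(x_i,x_j))_{0≤i,j≤n} dx_1⋯dx_n` with distinguished point `x₀`. -/
def ballDetIntCons (K : E2 → E2 → ℂ) (x₀ : E2) (r : ℝ) (n : ℕ) : ℂ :=
  ∫ x in Set.univ.pi fun _ : Fin n => closedBall (0 : E2) r,
    (Matrix.of fun i j : Fin (n + 1) =>
      K ((Fin.cons x₀ x : Fin (n + 1) → E2) i) ((Fin.cons x₀ x : Fin (n + 1) → E2) j)).det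

/-- The reduced Palm kernel at the origin:
`K_o^!(x,y) = (1/K(0,0))·(K(x,y)K(0,0) − K(x,0)K(0,y))`. -/
def palmKernelO (K : E2 → E2 → ℂ) (x y : E2) : ℂ :=
  (1 / K 0 0) * (K x y * K 0 0 - K x 0 * K 0 y)
/-! ### Small facts about `expNeg` -/

lemma expNeg_zero' : expNeg 0 = 1 := by simp [expNeg]

lemma expNeg_top' : expNeg ∞ = 0 := by simp [expNeg]

lemma expNeg_nonneg' (a : ℝ≥0∞) : 0 ≤ expNeg a := by
  unfold expNeg; split
  · exact le_refl 0
  · exact (Real.exp_pos _).le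

lemma expNeg_le_one' (a : ℝ≥0∞) : expNeg a ≤ 1 := by
  unfold expNeg; split
  · norm_num
  · calc Real.exp (-a.toReal) ≤ Real.exp 0 :=
        Real.exp_le_exp.mpr (neg_nonpos.mpr ENNReal.toReal_nonneg)
    _ = 1 := Real.exp_zero

lemma expNeg_ofReal' {t : ℝ} (ht : 0 ≤ t) : expNeg (ENNReal.ofReal t) = Real.exp (-t) := by
  rw [expNeg, if_neg ENNReal.ofReal_ne_top, ENNReal.toReal_ofReal ht]

/-! ### Trace of a Hermitian matrix is the sum of its eigenvalues -/

lemma herm_trace {m : ℕ} {A : Matrix (Fin m) (Fin m) ℂ} (hA : A.IsHermitian) :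
    A.trace = ∑ i, (hA.eigenvalues i : ℂ) := by
  exact hA.trace_eq_sum_eigenvalues

/-! ### Determinant bound for a positive semidefinite matrix with constant diagonal -/

lemma psd_det_le {m : ℕ} {lam : ℝ} (hlam : 0 < lam) {A : Matrix (Fin m) (Fin m) ℂ}
    (hpsd : A.PosSemidef) (hdiag : ∀ i, A i i = (lam : ℂ)) : ‖A.det‖ ≤ lam ^ m := by
  classical
  have hH : A.IsHermitian := hpsd.1
  have heignn : ∀ i, 0 ≤ hH.eigenvalues i := fun i => hpsd.eigenvalues_nonneg i
  have htr : ∑ i, hH.eigenvalues i = m * lam := by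
    have h1 : A.trace = ((m * lam : ℝ) : ℂ) := by
      have : A.trace = ∑ i : Fin m, A i i := rfl
      rw [this]
      simp only [hdiag, Finset.sum_const, Finset.card_univ, Fintype.card_fin, nsmul_eq_mul]
      push_cast; ring
    have h2 := herm_trace hH
    have h3 : ((∑ i, hH.eigenvalues i : ℝ) : ℂ) = ((m * lam : ℝ) : ℂ) := by
      rw [← h1, h2]; push_cast; rfl
    exact_mod_cast h3
  rw [hH.det_eq_prod_eigenvalues, norm_prod]
  rw [Finset.prod_congr rfl fun (i : Fin m) _ => show ‖(RCLike.ofReal (hH.eigenvalues i) : ℂ)‖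
    = hH.eigenvalues i by rw [RCLike.norm_ofReal, abs_of_nonneg (heignn i)]]
  rcases Nat.eq_zero_or_pos m with hm | hm
  · subst hm; simp
  · have hmne : ((m : ℝ)) ≠ 0 := by exact_mod_cast hm.ne'
    have amgm := Real.geom_mean_le_arith_mean_weighted Finset.univ
      (fun _ : Fin m => 1 / (m : ℝ)) hH.eigenvalues
      (fun i _ => by positivity)
      (by simp [Finset.sum_const, Finset.card_univ]; field_simp)
      (fun i _ => heignn i)
    have hsum : ∑ i : Fin m, (1 / (m : ℝ)) * hH.eigenvalues i = lam := by
      rw [← Finset.mul_sum, htr]; field_simp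
    rw [hsum] at amgm
    have key : ∏ i, hH.eigenvalues i = (∏ i, hH.eigenvalues i ^ ((1 : ℝ) / m)) ^ m := by
      rw [← Finset.prod_pow]
      refine (Finset.prod_congr rfl fun i _ => ?_).symm
      rw [← Real.rpow_natCast (hH.eigenvalues i ^ ((1 : ℝ) / m)) m,
        ← Real.rpow_mul (heignn i), one_div, inv_mul_cancel₀ hmne, Real.rpow_one]
    rw [key]
    exact pow_le_pow_left₀ (Finset.prod_nonneg fun i _ => Real.rpow_nonneg (heignn i) _) amgm m
/-! ### Schur complement identity, pointwise -/

lemma schur_point (K₀ : E2 → ℂ) (lam : ℝ) (hlam : 0 < lam) (hK₀0 : K₀ 0 = (lam : ℂ))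
    (n : ℕ) (x : Fin n → E2) :
    (Matrix.of fun i j : Fin n => palmKernelO (fun a b => K₀ (a - b)) (x i) (x j)).det
      = (1 / (lam : ℂ)) *
        (Matrix.of fun i j : Fin (n + 1) =>
          K₀ ((Fin.cons 0 x : Fin (n + 1) → E2) i - (Fin.cons 0 x : Fin (n + 1) → E2) j)).det := by
  classical
  have hlamC : ((lam : ℂ)) ≠ 0 := by exact_mod_cast hlam.ne'
  set y : Fin (n + 1) → E2 := Fin.cons 0 x with hy
  set e : Fin 1 ⊕ Fin n ≃ Fin (n + 1) := finSumFinEquiv.trans (finCongr (Nat.add_comm 1 n))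
    with he
  have he0 : ∀ i : Fin 1, e (Sum.inl i) = (0 : Fin (n + 1)) := by
    intro i
    apply Fin.ext
    have h1 : (e (Sum.inl i)).val = i.val := by simp [he]
    have h2 : i.val = 0 := by omega
    simp [h1, h2]
  have heS : ∀ j : Fin n, e (Sum.inr j) = Fin.succ j := by
    intro j
    apply Fin.ext
    have h1 : (e (Sum.inr j)).val = j.val + 1 := by
      simp only [he, Equiv.trans_apply, finCongr_apply, Fin.coe_cast, finSumFinEquiv_apply_right]
      simp [Fin.natAdd, Nat.add_comm]
    rw [h1, Fin.val_succ]
  set M : Matrix (Fin (n + 1)) (Fin (n + 1)) ℂ := Matrix.of fun i j => K₀ (y i - y j) with hM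
  letI : Invertible ((lam : ℂ) • (1 : Matrix (Fin 1) (Fin 1) ℂ)) :=
    ⟨(lam : ℂ)⁻¹ • (1 : Matrix (Fin 1) (Fin 1) ℂ),
      by rw [Matrix.smul_mul, Matrix.mul_smul, smul_smul, inv_mul_cancel₀ hlamC,
            one_smul, Matrix.one_mul],
      by rw [Matrix.smul_mul, Matrix.mul_smul, smul_smul, mul_inv_cancel₀ hlamC,
            one_smul, Matrix.one_mul]⟩
  have hsub : M.submatrix e e =
      Matrix.fromBlocks ((lam : ℂ) • 1)
        (Matrix.of fun (_ : Fin 1) (j : Fin n) => K₀ (0 - x j))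
        (Matrix.of fun (i : Fin n) (_ : Fin 1) => K₀ (x i - 0))
        (Matrix.of fun i j => K₀ (x i - x j)) := by
    ext i j
    cases i with
    | inl i =>
      cases j with
      | inl j =>
        have hij : i = j := Subsingleton.elim i j
        subst hij
        simp [Matrix.submatrix_apply, he0, hM, hy, Fin.cons_zero, _root_.sub_self, hK₀0,
          Matrix.smul_apply, Matrix.one_apply, smul_eq_mul]
      | inr j =>
        simp [Matrix.submatrix_apply, he0, heS, hM, hy, Fin.cons_zero, Fin.cons_succ]
    | inr i =>
      cases j with
      | inl j =>
        simp [Matrix.submatrix_apply, he0, heS, hM, hy, Fin.cons_zero, Fin.cons_succ]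
      | inr j =>
        simp [Matrix.submatrix_apply, heS, hM, hy, Fin.cons_succ]
  have hinv : (⅟((lam : ℂ) • (1 : Matrix (Fin 1) (Fin 1) ℂ)))
      = (lam : ℂ)⁻¹ • (1 : Matrix (Fin 1) (Fin 1) ℂ) := rfl
  have hmat : (Matrix.of fun i j => K₀ (x i - x j)) -
      (Matrix.of fun (i : Fin n) (_ : Fin 1) => K₀ (x i - 0)) *
        ⅟((lam : ℂ) • (1 : Matrix (Fin 1) (Fin 1) ℂ)) *
        (Matrix.of fun (_ : Fin 1) (j : Fin n) => K₀ (0 - x j))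
      = Matrix.of fun i j => palmKernelO (fun a b => K₀ (a - b)) (x i) (x j) := by
    rw [hinv]
    ext i j
    simp only [Matrix.sub_apply, Matrix.mul_apply, Matrix.smul_apply, Matrix.one_apply,
      Matrix.of_apply, Fin.sum_univ_one, palmKernelO]
    rw [show ((0 : E2) - 0) = 0 from _root_.sub_self 0]
    rw [hK₀0]
    simp only [if_pos rfl, smul_eq_mul, mul_one]
    field_simp
    try ring
    simp only [if_true, mul_one]
  have hdet : M.det = (lam : ℂ) *
      (Matrix.of fun i j : Fin n => palmKernelO (fun a b => K₀ (a - b)) (x i) (x j)).det := by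
    rw [← Matrix.det_submatrix_equiv_self e M, hsub, Matrix.det_fromBlocks₁₁, hmat]
    congr 1
    simp [Matrix.det_fin_one, Matrix.one_apply]
  rw [hdet, ← mul_assoc, one_div, inv_mul_cancel₀ hlamC, one_mul]

/-! ### Schur identity at the level of the ball integrals -/

lemma schur_int (K₀ : E2 → ℂ) (lam : ℝ) (hlam : 0 < lam) (hK₀0 : K₀ 0 = (lam : ℂ))
    (r : ℝ) (n : ℕ) :
    ballDetInt (palmKernelO fun a b => K₀ (a - b)) r n
      = (1 / (lam : ℂ)) * ballDetIntCons (fun a b => K₀ (a - b)) 0 r n := by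
  unfold ballDetInt ballDetIntCons
  rw [← integral_const_mul]
  exact integral_congr_ae (Filter.Eventually.of_forall fun x =>
    schur_point K₀ lam hlam hK₀0 n x)

/-! ### Bound on the (n+1)-point determinant integral -/

lemma cons_bound (K₀ : E2 → ℂ) (lam : ℝ) (hlam : 0 < lam) (hK₀0 : K₀ 0 = (lam : ℂ))
    (hker : IsKernel fun a b => K₀ (a - b)) (r : ℝ) (n : ℕ) :
    ‖ballDetIntCons (fun a b => K₀ (a - b)) 0 r n‖
      ≤ lam ^ (n + 1) * ((volume (closedBall (0 : E2) r)).toReal) ^ n := by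
  unfold ballDetIntCons
  have hs : volume (Set.univ.pi fun _ : Fin n => closedBall (0 : E2) r)
      = (volume (closedBall (0 : E2) r)) ^ n := by
    rw [MeasureTheory.volume_pi, Measure.pi_pi]
    simp [Finset.prod_const]
  have hfin : volume (Set.univ.pi fun _ : Fin n => closedBall (0 : E2) r) < ∞ := by
    rw [hs]
    exact ENNReal.pow_lt_top measure_closedBall_lt_top
  have hbd := norm_setIntegral_le_of_norm_le_const_ae' (C := lam ^ (n + 1)) hfin
    (Filter.Eventually.of_forall fun x _ => by
      refine psd_det_le hlam (hker.posSemidef (n + 1) (Fin.cons 0 x)) fun i => ?_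
      simp [_root_.sub_self, hK₀0])
  calc ‖∫ x in Set.univ.pi fun _ : Fin n => closedBall (0 : E2) r,
        (Matrix.of fun i j : Fin (n + 1) =>
          K₀ ((Fin.cons 0 x : Fin (n + 1) → E2) i - (Fin.cons 0 x : Fin (n + 1) → E2) j)).det‖
      ≤ lam ^ (n + 1) * (volume (Set.univ.pi fun _ : Fin n => closedBall (0 : E2) r)).toReal :=
        hbd
    _ = lam ^ (n + 1) * ((volume (closedBall (0 : E2) r)).toReal) ^ n := by
        rw [hs, ENNReal.toReal_pow]
/-! ### Evaluating the Laplace identity at multiples of ball indicators -/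

lemma laplace_eval {Ω : Type} [MeasurableSpace Ω] (μ : Measure Ω) (Φ : Ω → Measure E2)
    (Kp : E2 → E2 → ℂ) (hLaplace : DPPLaplaceOnCompact μ Φ Kp) (r : ℝ) (t : ℝ≥0∞) :
    ((∫ ω, expNeg (t * Φ ω (closedBall (0 : E2) r)) ∂μ : ℝ) : ℂ)
      = ∑' n : ℕ, (((-1 : ℂ) ^ n / n.factorial) * ballDetInt Kp r n) *
          ((1 - expNeg t : ℝ) : ℂ) ^ n := by
  classical
  set B := closedBall (0 : E2) r with hBdef
  have hBm : MeasurableSet B := measurableSet_closedBall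
  have h := hLaplace (B.indicator fun _ => t) (measurable_const.indicator hBm)
    ⟨B, isCompact_closedBall _ _, fun x hx => Set.indicator_of_notMem hx _⟩
  have hL : (fun ω => expNeg (∫⁻ x, B.indicator (fun _ => t) x ∂(Φ ω)))
      = fun ω => expNeg (t * Φ ω B) := by
    funext ω; rw [lintegral_indicator_const hBm]
  rw [hL] at h
  rw [h]
  refine tsum_congr fun n => ?_
  unfold dppTerm
  have hg : ∀ z : E2, ((1 - expNeg (B.indicator (fun _ => t) z) : ℝ) : ℂ)
      = ((1 - expNeg t : ℝ) : ℂ) * B.indicator (fun _ => (1 : ℂ)) z := by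
    intro z; by_cases hz : z ∈ B
    · rw [Set.indicator_of_mem hz, Set.indicator_of_mem hz, mul_one]
    · rw [Set.indicator_of_notMem hz, Set.indicator_of_notMem hz, mul_zero, expNeg_zero']
      norm_num
  have hprod : ∀ x : Fin n → E2, (∏ i, B.indicator (fun _ => (1 : ℂ)) (x i))
      = (Set.univ.pi fun _ : Fin n => B).indicator (fun _ => (1 : ℂ)) x := by
    intro x; by_cases hx : x ∈ Set.univ.pi fun _ : Fin n => B
    · rw [Set.indicator_of_mem hx]
      exact Finset.prod_eq_one fun i _ => Set.indicator_of_mem (hx i (Set.mem_univ i)) _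
    · rw [Set.indicator_of_notMem hx]
      obtain ⟨i, hi⟩ : ∃ i, x i ∉ B := by simpa [Set.mem_pi] using hx
      exact Finset.prod_eq_zero (Finset.mem_univ i) (Set.indicator_of_notMem hi _)
  have hint : (∫ x : Fin n → E2,
        (Matrix.of fun i j : Fin n => Kp (x i) (x j)).det *
          ∏ i : Fin n, ((1 - expNeg (B.indicator (fun _ => t) (x i)) : ℝ) : ℂ))
      = ((1 - expNeg t : ℝ) : ℂ) ^ n *
          ∫ x in Set.univ.pi fun _ : Fin n => B,
            (Matrix.of fun i j : Fin n => Kp (x i) (x j)).det := by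
    rw [← MeasureTheory.integral_indicator (MeasurableSet.univ_pi fun _ => hBm),
      ← integral_const_mul]
    refine integral_congr_ae (Filter.Eventually.of_forall fun x => ?_)
    simp only [hg]
    rw [Finset.prod_mul_distrib, Finset.prod_const, hprod, Finset.card_univ, Fintype.card_fin]
    by_cases hx : x ∈ Set.univ.pi fun _ : Fin n => B
    · rw [Set.indicator_of_mem hx, Set.indicator_of_mem hx]; ring
    · rw [Set.indicator_of_notMem hx, Set.indicator_of_notMem hx]; ring
  rw [hint]
  unfold ballDetInt
  ring
/-- Nearest neighbor function of a stationary DPP: if `Φ̃` satisfies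
the DPP Laplace identity with the reduced Palm kernel `K_o^!`, then
`D(r) = P(Φ̃(B(0,r)) ≥ 1) = Σ_{n≥1} ((-1)^{n-1}/n!) ∫_{B(0,r)^n} det(K_o^!(x_i,x_j)) dx`,
and this series equals
`Σ_{n≥1} ((-1)^{n-1}/n!) ∫_{B(0,r)^n} (1/K(0,0)) det(K(x_i,x_j))_{0≤i,j≤n} dx` with
distinguished point `x₀ = 0`. -/
theorem stmt_5 {Ω : Type} [MeasurableSpace Ω] (μ : Measure Ω) [IsProbabilityMeasure μ]
    (K₀ : E2 → ℂ) (lam : ℝ) (hlam : 0 < lam) (hK₀0 : K₀ 0 = (lam : ℂ))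
    (hker : IsKernel fun x y => K₀ (x - y))
    (Φ : Ω → Measure E2)
    (hΦmeas : ∀ g : E2 → ℝ≥0∞, Measurable g → Measurable fun ω => ∫⁻ x, g x ∂(Φ ω))
    (hΦlocfin : ∀ ω, ∀ s : Set E2, IsCompact s → Φ ω s < ∞)
    (hLaplace : DPPLaplaceOnCompact μ Φ (palmKernelO fun x y => K₀ (x - y)))
    (r : ℝ) (hr : 0 ≤ r) :
    (((μ {ω | 1 ≤ Φ ω (closedBall (0 : E2) r)}).toReal : ℝ) : ℂ) =
      ∑' n : ℕ, ((-1 : ℂ) ^ n / (n + 1).factorial) *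
        ballDetInt (palmKernelO fun x y => K₀ (x - y)) r (n + 1) ∧
    (∑' n : ℕ, ((-1 : ℂ) ^ n / (n + 1).factorial) *
        ballDetInt (palmKernelO fun x y => K₀ (x - y)) r (n + 1)) =
      ∑' n : ℕ, ((-1 : ℂ) ^ n / (n + 1).factorial) *
        ((1 / K₀ 0) * ballDetIntCons (fun x y => K₀ (x - y)) 0 r (n + 1)) := by
  classical
  have hlamC : ((lam : ℂ)) ≠ 0 := by exact_mod_cast hlam.ne'
  set B := closedBall (0 : E2) r with hBdef
  have hBm : MeasurableSet B := measurableSet_closedBall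
  set Kp := palmKernelO fun x y => K₀ (x - y) with hKpdef
  -- the second assertion (term by term Schur identity)
  have hpart2 : (∑' n : ℕ, ((-1 : ℂ) ^ n / (n + 1).factorial) * ballDetInt Kp r (n + 1)) =
      ∑' n : ℕ, ((-1 : ℂ) ^ n / (n + 1).factorial) *
        ((1 / K₀ 0) * ballDetIntCons (fun x y => K₀ (x - y)) 0 r (n + 1)) := by
    refine tsum_congr fun n => ?_
    rw [hKpdef, schur_int K₀ lam hlam hK₀0 r (n + 1), hK₀0]
  -- measurability of the count variable
  have hXmeas : Measurable fun ω => Φ ω B := by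
    have h := hΦmeas (B.indicator fun _ => (1 : ℝ≥0∞))
      (measurable_const.indicator hBm)
    have heq : (fun ω => ∫⁻ x, B.indicator (fun _ => (1 : ℝ≥0∞)) x ∂(Φ ω))
        = fun ω => Φ ω B := by
      funext ω; rw [lintegral_indicator_const hBm, one_mul]
    rwa [heq] at h
  have hXlt : ∀ ω, Φ ω B < ∞ := fun ω => hΦlocfin ω B (isCompact_closedBall _ _)
  have hYmeas : Measurable fun ω => (Φ ω B).toReal := hXmeas.ennreal_toReal
  have hYnn : ∀ ω, 0 ≤ (Φ ω B).toReal := fun ω => ENNReal.toReal_nonneg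
  -- constants and coefficient bounds
  set V : ℝ := (volume B).toReal with hVdef
  have hVnn : 0 ≤ V := ENNReal.toReal_nonneg
  set A₀ : ℝ := lam * V with hA₀def
  have hA₀nn : 0 ≤ A₀ := mul_nonneg hlam.le hVnn
  set c : ℕ → ℂ := fun n => ((-1 : ℂ) ^ n / n.factorial) * ballDetInt Kp r n with hcdef
  have hcb : ∀ n, ‖c n‖ ≤ A₀ ^ n / n.factorial := by
    intro n
    have h1 : ‖ballDetInt Kp r n‖ ≤ lam ^ n * V ^ n := by
      rw [hKpdef, schur_int K₀ lam hlam hK₀0 r n, norm_mul]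
      have h2 : ‖(1 / (lam : ℂ))‖ = 1 / lam := by
        rw [norm_div, norm_one, Complex.norm_real, Real.norm_eq_abs, abs_of_pos hlam]
      rw [h2]
      calc (1 / lam) * ‖ballDetIntCons (fun a b => K₀ (a - b)) 0 r n‖
          ≤ (1 / lam) * (lam ^ (n + 1) * V ^ n) := by
            refine mul_le_mul_of_nonneg_left ?_ (by positivity)
            exact cons_bound K₀ lam hlam hK₀0 hker r n
        _ = lam ^ n * V ^ n := by field_simp [pow_succ]; try ring
    have h3 : ‖c n‖ = (1 / n.factorial) * ‖ballDetInt Kp r n‖ := by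
      rw [hcdef]
      simp only [norm_mul, norm_div, norm_pow, norm_neg, norm_one, one_pow]
      rw [Complex.norm_natCast]
      try ring_nf
    rw [h3]
    calc (1 / (n.factorial : ℝ)) * ‖ballDetInt Kp r n‖
        ≤ (1 / n.factorial) * (lam ^ n * V ^ n) := by
          refine mul_le_mul_of_nonneg_left h1 (by positivity)
      _ = A₀ ^ n / n.factorial := by rw [hA₀def, mul_pow]; ring
  have hsummA : Summable fun n : ℕ => A₀ ^ n / (n.factorial : ℝ) :=
    Real.summable_pow_div_factorial A₀
  have hsc : Summable c :=
    Summable.of_norm_bounded hsummA hcb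
  have hscn : Summable fun n => ‖c n‖ :=
    Summable.of_nonneg_of_le (fun n => norm_nonneg _) hcb hsummA
  have hsummNA : Summable fun n : ℕ => (n : ℝ) * (A₀ ^ n / n.factorial) := by
    refine Summable.of_nonneg_of_le
      (fun n => mul_nonneg (Nat.cast_nonneg n) (by positivity)) (fun n => ?_)
      (Real.summable_pow_div_factorial (2 * A₀))
    have hn2 : (n : ℝ) ≤ 2 ^ n := by exact_mod_cast (Nat.lt_two_pow_self (n := n)).le
    calc (n : ℝ) * (A₀ ^ n / n.factorial) ≤ 2 ^ n * (A₀ ^ n / n.factorial) := by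
          refine mul_le_mul_of_nonneg_right hn2 (by positivity)
      _ = (2 * A₀) ^ n / n.factorial := by rw [mul_pow]; ring
  set C : ℝ := ∑' n : ℕ, (n : ℝ) * (A₀ ^ n / n.factorial) with hCdef
  -- summable with geometric weight
  have hscs : ∀ s : ℝ, |s| ≤ 1 → Summable fun n => c n * ((s : ℂ)) ^ n := by
    intro s hs
    refine Summable.of_norm_bounded hsummA fun n => ?_
    rw [norm_mul, norm_pow, Complex.norm_real, Real.norm_eq_abs]
    calc ‖c n‖ * |s| ^ n ≤ (A₀ ^ n / n.factorial) * 1 ^ n := by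
          refine mul_le_mul (hcb n) (pow_le_pow_left₀ (abs_nonneg s) hs n) (by positivity)
            (by positivity)
      _ = A₀ ^ n / n.factorial := by rw [one_pow, mul_one]
  -- Lipschitz estimate near s = 1
  have hlip : ∀ u : ℝ, 0 ≤ u → u ≤ 1 →
      ‖(∑' n, c n * (((1 - u : ℝ)) : ℂ) ^ n) - ∑' n, c n‖ ≤ C * u := by
    intro u hu0 hu1
    have hsum1 : Summable fun n => c n * (((1 - u : ℝ)) : ℂ) ^ n :=
      hscs (1 - u) (by rw [abs_of_nonneg (by linarith)]; linarith)
    have hsummand : ∀ n : ℕ, ‖c n * (((1 - u : ℝ)) : ℂ) ^ n - c n‖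
        ≤ ((n : ℝ) * (A₀ ^ n / n.factorial)) * u := by
      intro n
      have h1 : c n * (((1 - u : ℝ)) : ℂ) ^ n - c n = c n * ((((1 - u : ℝ)) : ℂ) ^ n - 1) := by
        ring
      rw [h1, norm_mul]
      have h2 : (((1 - u : ℝ)) : ℂ) ^ n - 1 = (((1 - u) ^ n - 1 : ℝ) : ℂ) := by
        push_cast; ring
      rw [h2, Complex.norm_real, Real.norm_eq_abs]
      have hb : (1 : ℝ) + n * (-u) ≤ (1 + (-u)) ^ n := one_add_mul_le_pow (by linarith) n
      have hle1 : (1 - u) ^ n ≤ 1 := pow_le_one₀ (by linarith) (by linarith)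
      have h3 : |(1 - u) ^ n - 1| ≤ n * u := by
        rw [abs_of_nonpos (by linarith)]
        have h4 : (1 + -u) = (1 - u) := by ring
        rw [h4] at hb
        linarith
      calc ‖c n‖ * |(1 - u) ^ n - 1| ≤ (A₀ ^ n / n.factorial) * ((n : ℝ) * u) := by
            refine mul_le_mul (hcb n) h3 (abs_nonneg _) (by positivity)
        _ = ((n : ℝ) * (A₀ ^ n / n.factorial)) * u := by ring
    rw [← Summable.tsum_sub hsum1 hsc]
    have hnormsum : Summable fun n => ‖c n * (((1 - u : ℝ)) : ℂ) ^ n - c n‖ :=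
      Summable.of_nonneg_of_le (fun n => norm_nonneg _) hsummand (hsummNA.mul_right u)
    calc ‖∑' n, (c n * (((1 - u : ℝ)) : ℂ) ^ n - c n)‖
        ≤ ∑' n, ‖c n * (((1 - u : ℝ)) : ℂ) ^ n - c n‖ := norm_tsum_le_tsum_norm hnormsum
      _ ≤ ∑' n : ℕ, ((n : ℝ) * (A₀ ^ n / n.factorial)) * u :=
          Summable.tsum_le_tsum hsummand hnormsum (hsummNA.mul_right u)
      _ = C * u := by rw [hCdef]; exact tsum_mul_right
  -- Laplace identity evaluations
  have hgeval : ∀ t : ℝ≥0∞, ((∫ ω, expNeg (t * Φ ω B) ∂μ : ℝ) : ℂ)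
      = ∑' n : ℕ, c n * ((1 - expNeg t : ℝ) : ℂ) ^ n := by
    intro t
    exact laplace_eval μ Φ Kp hLaplace r t
  -- value at t = ∞
  have hA₀set : MeasurableSet {ω | Φ ω B = 0} := hXmeas (measurableSet_singleton 0)
  have htopfun : (fun ω => expNeg (⊤ * Φ ω B))
      = Set.indicator {ω | Φ ω B = 0} (fun _ => (1 : ℝ)) := by
    funext ω
    by_cases h0 : Φ ω B = 0
    · have hm : ω ∈ {ω | Φ ω B = 0} := h0
      rw [Set.indicator_of_mem hm, h0, mul_zero, expNeg_zero']
    · have hm : ω ∉ {ω | Φ ω B = 0} := h0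
      rw [Set.indicator_of_notMem hm, ENNReal.top_mul h0, expNeg_top']
  have ha : ((μ {ω | Φ ω B = 0}).toReal : ℂ) = ∑' n, c n := by
    have h := hgeval ⊤
    rw [htopfun] at h
    have h2 : ∫ ω, Set.indicator {ω | Φ ω B = 0} (fun _ => (1 : ℝ)) ω ∂μ
        = (μ {ω | Φ ω B = 0}).toReal := by
      rw [MeasureTheory.integral_indicator hA₀set]
      simp
      rfl
    rw [h2] at h
    rw [h]
    refine tsum_congr fun n => ?_
    rw [expNeg_top']
    norm_num
  -- the mid region has measure zero
  have hq0 : ∀ b : ℝ, b < 1 → μ {ω | Φ ω B ≠ 0 ∧ (Φ ω B).toReal ≤ b} = 0 := by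
    intro b hb
    by_contra hq
    set S := {ω | Φ ω B ≠ 0 ∧ (Φ ω B).toReal ≤ b} with hSdef
    have hSm : MeasurableSet S :=
      (hXmeas (measurableSet_singleton 0)).compl.inter (hYmeas measurableSet_Iic)
    set q : ℝ := (μ S).toReal with hqdef
    have hqpos : 0 < q := ENNReal.toReal_pos hq (measure_ne_top μ S)
    -- main estimate
    have hest : ∀ t₀ : ℝ, 0 < t₀ → q * Real.exp (-(t₀ * b)) ≤ C * Real.exp (-t₀) := by
      intro t₀ ht₀
      set t : ℝ≥0∞ := ENNReal.ofReal t₀ with htdef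
      have hexp : ∀ ω, expNeg (t * Φ ω B) = Real.exp (-(t₀ * (Φ ω B).toReal)) := by
        intro ω
        have hfin : t * Φ ω B ≠ ∞ := ENNReal.mul_ne_top ENNReal.ofReal_ne_top (hXlt ω).ne
        rw [expNeg, if_neg hfin, ENNReal.toReal_mul, htdef, ENNReal.toReal_ofReal ht₀.le]
      have hmeasg : Measurable fun ω => Real.exp (-(t₀ * (Φ ω B).toReal)) :=
        ((hYmeas.const_mul t₀).neg).exp
      have hIntegrable : Integrable (fun ω => expNeg (t * Φ ω B)) μ := by
        rw [show (fun ω => expNeg (t * Φ ω B))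
            = fun ω => Real.exp (-(t₀ * (Φ ω B).toReal)) from funext hexp]
        refine (integrable_const (1 : ℝ)).mono' hmeasg.aestronglyMeasurable
          (Filter.Eventually.of_forall fun ω => ?_)
        rw [Real.norm_eq_abs, abs_of_pos (Real.exp_pos _)]
        calc Real.exp (-(t₀ * (Φ ω B).toReal)) ≤ Real.exp 0 := by
              refine Real.exp_le_exp.mpr ?_
              have := hYnn ω
              nlinarith
          _ = 1 := Real.exp_zero
      set L : ℝ := ∫ ω, expNeg (t * Φ ω B) ∂μ with hLdef
      -- upper bound via the Laplace identity and the Lipschitz estimate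
      have hu1 : Real.exp (-t₀) ≤ 1 := by
        calc Real.exp (-t₀) ≤ Real.exp 0 := Real.exp_le_exp.mpr (by linarith)
          _ = 1 := Real.exp_zero
      have hLa : ‖((L : ℂ)) - ((μ {ω | Φ ω B = 0}).toReal : ℂ)‖ ≤ C * Real.exp (-t₀) := by
        rw [hLdef, hgeval t, ha]
        have hxt : expNeg t = Real.exp (-t₀) := expNeg_ofReal' ht₀.le
        rw [hxt]
        exact hlip (Real.exp (-t₀)) (Real.exp_pos _).le hu1
      have habs : L - (μ {ω | Φ ω B = 0}).toReal ≤ C * Real.exp (-t₀) := by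
        have h5 : ((L : ℂ)) - ((μ {ω | Φ ω B = 0}).toReal : ℂ)
            = (((L - (μ {ω | Φ ω B = 0}).toReal : ℝ)) : ℂ) := by push_cast; ring
        rw [h5, Complex.norm_real, Real.norm_eq_abs] at hLa
        exact (le_abs_self _).trans hLa
      -- lower bound
      have hdisj : Disjoint {ω | Φ ω B = 0} S :=
        Set.disjoint_left.mpr fun ω hω hωS => hωS.1 hω
      have hALeb : ∫ ω in {ω | Φ ω B = 0}, expNeg (t * Φ ω B) ∂μ
          = (μ {ω | Φ ω B = 0}).toReal := by
        rw [setIntegral_congr_fun hA₀set (g := fun _ => (1 : ℝ)) ?_]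
        · rw [setIntegral_const, smul_eq_mul, mul_one, measureReal_def]
        · intro ω hω
          have hω0 : Φ ω B = 0 := hω
          simp only [hexp ω, hω0, ENNReal.toReal_zero, mul_zero, neg_zero, Real.exp_zero,
            expNeg_zero']
      have hS_lower : q * Real.exp (-(t₀ * b)) ≤ ∫ ω in S, expNeg (t * Φ ω B) ∂μ := by
        have harg : ∀ ω ∈ S, Real.exp (-(t₀ * b)) ≤ expNeg (t * Φ ω B) := by
          intro ω hω
          rw [hexp ω]
          refine Real.exp_le_exp.mpr ?_
          have hωb : (Φ ω B).toReal ≤ b := hω.2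
          nlinarith
        have h6 := setIntegral_ge_of_const_le (c := Real.exp (-(t₀ * b))) hSm
          (measure_ne_top μ S) harg hIntegrable.integrableOn
        calc q * Real.exp (-(t₀ * b)) = Real.exp (-(t₀ * b)) * (μ S).toReal := by
              rw [hqdef]; ring
          _ ≤ ∫ ω in S, expNeg (t * Φ ω B) ∂μ := by rw [mul_comm]; exact h6
      have hlower : (μ {ω | Φ ω B = 0}).toReal + q * Real.exp (-(t₀ * b)) ≤ L := by
        calc (μ {ω | Φ ω B = 0}).toReal + q * Real.exp (-(t₀ * b))
            ≤ (∫ ω in {ω | Φ ω B = 0}, expNeg (t * Φ ω B) ∂μ)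
              + ∫ ω in S, expNeg (t * Φ ω B) ∂μ :=
              add_le_add (le_of_eq hALeb.symm) hS_lower
          _ = ∫ ω in {ω | Φ ω B = 0} ∪ S, expNeg (t * Φ ω B) ∂μ :=
              (setIntegral_union hdisj hSm hIntegrable.integrableOn
                hIntegrable.integrableOn).symm
          _ ≤ L := by
              rw [hLdef]
              exact setIntegral_le_integral hIntegrable
                (Filter.Eventually.of_forall fun ω => expNeg_nonneg' _)
      linarith
    -- take t₀ → ∞
    have hq' : ∀ t₀ : ℝ, 0 < t₀ → q ≤ C * Real.exp (-(t₀ * (1 - b))) := by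
      intro t₀ ht₀
      have h := hest t₀ ht₀
      have hepos : (0 : ℝ) < Real.exp (-(t₀ * b)) := Real.exp_pos _
      have h7 : C * Real.exp (-t₀) = (C * Real.exp (-(t₀ * (1 - b)))) * Real.exp (-(t₀ * b)) := by
        rw [mul_assoc, ← Real.exp_add]
        ring_nf
      rw [h7] at h
      exact le_of_mul_le_mul_right h hepos
    have htend : Tendsto (fun t₀ : ℝ => C * Real.exp (-(t₀ * (1 - b)))) atTop (nhds 0) := by
      have h8 : Tendsto (fun t₀ : ℝ => -(t₀ * (1 - b))) atTop atBot := by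
        have h9 : Tendsto (fun t₀ : ℝ => t₀ * (1 - b)) atTop atTop :=
          Tendsto.atTop_mul_const (by linarith) tendsto_id
        exact tendsto_neg_atBot_iff.mpr h9
      have h10 : Tendsto (fun t₀ : ℝ => Real.exp (-(t₀ * (1 - b)))) atTop (nhds 0) :=
        Real.tendsto_exp_atBot.comp h8
      simpa using h10.const_mul C
    obtain ⟨t₀, ht₀lt, ht₀pos⟩ :=
      ((htend.eventually (gt_mem_nhds hqpos)).and (eventually_gt_atTop 0)).exists
    exact absurd (hq' t₀ ht₀pos) (not_le.mpr ht₀lt)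
  have hmid : μ {ω | Φ ω B ≠ 0 ∧ Φ ω B < 1} = 0 := by
    have hsub : {ω | Φ ω B ≠ 0 ∧ Φ ω B < 1}
        ⊆ ⋃ k : ℕ, {ω | Φ ω B ≠ 0 ∧ (Φ ω B).toReal ≤ 1 - 1 / (k + 2)} := by
      intro ω hω
      have hY1 : (Φ ω B).toReal < 1 := by
        have h11 := (ENNReal.toReal_lt_toReal (hXlt ω).ne ENNReal.one_ne_top).mpr hω.2
        simpa using h11
      obtain ⟨k, hk⟩ := exists_nat_one_div_lt (show (0 : ℝ) < 1 - (Φ ω B).toReal by linarith)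
      refine Set.mem_iUnion.mpr ⟨k, hω.1, ?_⟩
      have h12 : 1 / ((k : ℝ) + 2) ≤ 1 / ((k : ℝ) + 1) := by
        apply one_div_le_one_div_of_le <;> [positivity; linarith]
      linarith
    refine measure_mono_null hsub (measure_iUnion_null fun k => hq0 _ ?_)
    have : (0 : ℝ) < 1 / ((k : ℝ) + 2) := by positivity
    linarith
  -- complement bookkeeping
  have hlt1 : {ω | Φ ω B < 1} = {ω | Φ ω B ≠ 0 ∧ Φ ω B < 1} ∪ {ω | Φ ω B = 0} := by
    ext ω
    by_cases h : Φ ω B = 0 <;> simp [h]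
  have hμlt : μ {ω | Φ ω B < 1} = μ {ω | Φ ω B = 0} := by
    rw [hlt1]
    refine le_antisymm ?_ (measure_mono Set.subset_union_right)
    calc μ ({ω | Φ ω B ≠ 0 ∧ Φ ω B < 1} ∪ {ω | Φ ω B = 0})
        ≤ μ {ω | Φ ω B ≠ 0 ∧ Φ ω B < 1} + μ {ω | Φ ω B = 0} := measure_union_le _ _
      _ = μ {ω | Φ ω B = 0} := by rw [hmid, zero_add]
  have hcompl : {ω | 1 ≤ Φ ω B} = {ω | Φ ω B < 1}ᶜ := by
    ext ω; simp [not_lt]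
  have hlt1m : MeasurableSet {ω | Φ ω B < 1} := hXmeas measurableSet_Iio
  have hμ1 : μ {ω | 1 ≤ Φ ω B} = 1 - μ {ω | Φ ω B = 0} := by
    rw [hcompl, prob_compl_eq_one_sub hlt1m, hμlt]
  have ha1 : μ {ω | Φ ω B = 0} ≤ 1 := prob_le_one
  have htoReal : (μ {ω | 1 ≤ Φ ω B}).toReal = 1 - (μ {ω | Φ ω B = 0}).toReal := by
    rw [hμ1, ENNReal.toReal_sub_of_le ha1 ENNReal.one_ne_top, ENNReal.toReal_one]
  -- c 0 = 1
  have hc0 : c 0 = 1 := by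
    have h1 : (Set.univ.pi fun _ : Fin 0 => closedBall (0 : E2) r)
        = (Set.univ : Set (Fin 0 → E2)) := by
      ext x; simp [Set.mem_pi]
    have h2 : (volume : Measure (Fin 0 → E2)) Set.univ = 1 := by
      rw [MeasureTheory.volume_pi, Measure.pi_univ]
      simp
    have h3 : ballDetInt Kp r 0 = 1 := by
      unfold ballDetInt
      rw [h1, Measure.restrict_univ]
      simp only [Matrix.det_fin_zero]
      rw [integral_const, measureReal_def, h2]
      simp
    show ((-1 : ℂ) ^ (0 : ℕ) / (0 : ℕ).factorial) * ballDetInt Kp r 0 = 1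
    rw [h3]
    norm_num
  -- final computation
  have hterm : ∀ n : ℕ, ((-1 : ℂ) ^ n / (n + 1).factorial) * ballDetInt Kp r (n + 1)
      = - c (n + 1) := by
    intro n
    rw [hcdef]
    simp only [pow_succ]
    ring
  have hGoal1 : (((μ {ω | 1 ≤ Φ ω B}).toReal : ℝ) : ℂ)
      = ∑' n : ℕ, ((-1 : ℂ) ^ n / (n + 1).factorial) * ballDetInt Kp r (n + 1) := by
    rw [htoReal]
    have hshift : ∑' n, c n = c 0 + ∑' n, c (n + 1) := Summable.tsum_eq_zero_add hsc
    rw [hc0] at hshift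
    have hsum2 : (∑' n : ℕ, ((-1 : ℂ) ^ n / (n + 1).factorial) * ballDetInt Kp r (n + 1))
        = - ∑' n, c (n + 1) := by
      rw [← tsum_neg]
      exact tsum_congr hterm
    rw [hsum2]
    have haR := ha
    push_cast
    linear_combination - haR - hshift
  exact ⟨hGoal1, hpart2⟩

end
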